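/- Let W ⊆ L_Σ be a finite set of propositional formulas, D_W = {δ_p | p ∈ var(W)}, and consider the finite default theory (D_W, W^±). Then for each φ ∈ L_Σ: W ⊬_p φ if and only if there exists a set C ⊆ D_W such that φ ∉ Cn(W^± ∪ c(C)) and, for each δ ∈ D_W \ C, there is some extension E of (D_W, W^±) with c(δ) ∉ E. -/

import Mathlib

namespace Para

/-- Propositional formulas over an alphabet `α`. -/
inductive Fml (α : Type) : Type
  | atom : α → Fml α
  | top : Fml α
  | bot : Fml α
  | neg : Fml α → Fml α
  | conj : Fml α → Fml α → Fml α
  | disj : Fml α → Fml α → Fml α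
  | impl : Fml α → Fml α → Fml α

namespace Fml

variable {α β : Type}

/-- Biconditional `a ≡ b`. -/
def iff' (a b : Fml α) : Fml α := conj (impl a b) (impl b a)

/-- Classical satisfaction: truth of a formula under an interpretation
(a set of atoms, those being true). -/
def holds (M : Set α) : Fml α → Prop
  | atom p => p ∈ M
  | top => True
  | bot => False
  | neg φ => ¬ holds M φ
  | conj φ ψ => holds M φ ∧ holds M ψ
  | disj φ ψ => holds M φ ∨ holds M ψ
  | impl φ ψ => holds M φ → holds M ψ

/-- The set of atoms occurring in a formula. -/
def atoms : Fml α → Set α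
  | atom p => {p}
  | top => ∅
  | bot => ∅
  | neg φ => atoms φ
  | conj φ ψ => atoms φ ∪ atoms ψ
  | disj φ ψ => atoms φ ∪ atoms ψ
  | impl φ ψ => atoms φ ∪ atoms ψ

/-- Renaming of atoms. -/
def map (f : α → β) : Fml α → Fml β
  | atom p => atom (f p)
  | top => top
  | bot => bot
  | neg φ => neg (map f φ)
  | conj φ ψ => conj (map f φ) (map f ψ)
  | disj φ ψ => disj (map f φ) (map f ψ)
  | impl φ ψ => impl (map f φ) (map f ψ)

end Fml

/-- Classical consequence (= derivability, by soundness and completeness of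
classical propositional logic). -/
def Entails {α : Type} (S : Set (Fml α)) (φ : Fml α) : Prop :=
  ∀ M : Set α, (∀ ψ ∈ S, ψ.holds M) → φ.holds M

/-- Deductive closure `Cn`. -/
def Cn {α : Type} (S : Set (Fml α)) : Set (Fml α) := {φ | Entails S φ}

/-- Consistency: `⊥ ∉ Cn S`. -/
def Consistent {α : Type} (S : Set (Fml α)) : Prop := Fml.bot ∉ Cn S

/-- The atoms occurring in a set of formulas, `var(S)`. -/
def vars {α : Type} (S : Set (Fml α)) : Set α := ⋃ φ ∈ S, φ.atoms

/-- The alphabet `Σ ∪ Σ^±`: original atoms `p`, positive atoms `p⁺`,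
negative atoms `p⁻`. -/
inductive XAtom (α : Type) : Type
  | orig : α → XAtom α
  | pos : α → XAtom α
  | neg : α → XAtom α

/-- Signed translation with a polarity flag (`true` = positive occurrence):
positive occurrences of `p` become `p⁺`, negative ones become `¬p⁻`. -/
def signedAux {α : Type} : Fml α → Bool → Fml (XAtom α)
  | .atom p, true => .atom (.pos p)
  | .atom p, false => .neg (.atom (.neg p))
  | .top, _ => .top
  | .bot, _ => .bot
  | .neg φ, b => .neg (signedAux φ (!b))
  | .conj φ ψ, b => .conj (signedAux φ b) (signedAux ψ b)
  | .disj φ ψ, b => .disj (signedAux φ b) (signedAux ψ b)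
  | .impl φ ψ, b => .impl (signedAux φ (!b)) (signedAux ψ b)

/-- The signed translation `α^±`. -/
def signed {α : Type} (φ : Fml α) : Fml (XAtom α) := signedAux φ true

/-- Embedding of `L_Σ` into `L_{Σ∪Σ^±}`. -/
def emb {α : Type} : Fml α → Fml (XAtom α) := Fml.map XAtom.orig

/-- `W^± = {α^± | α ∈ W}`. -/
def signedSet {α : Type} (W : Set (Fml α)) : Set (Fml (XAtom α)) := signed '' W

/-- A default rule `(pre : jus / con)`. -/
structure Dflt (α : Type) where
  pre : Fml α
  jus : Fml α
  con : Fml α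

/-- Atoms occurring in a default rule. -/
def Dflt.atoms {α : Type} (d : Dflt α) : Set α :=
  d.pre.atoms ∪ d.jus.atoms ∪ d.con.atoms

/-- The Reiter sequence `E_1 = V`, `E_{n+1} = Cn(E_n) ∪ {γ | (α:β/γ) ∈ D, α ∈ E_n, ¬β ∉ E}`
(0-indexed here). -/
def extSeq {α : Type} (D : Set (Dflt α)) (V E : Set (Fml α)) : ℕ → Set (Fml α)
  | 0 => V
  | n+1 => Cn (extSeq D V E n) ∪
      {γ | ∃ d ∈ D, d.con = γ ∧ d.pre ∈ extSeq D V E n ∧ Fml.neg d.jus ∉ E}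

/-- `E` is a (Reiter) extension of the default theory `(D, V)`. -/
def IsExtension {α : Type} (D : Set (Dflt α)) (V E : Set (Fml α)) : Prop :=
  E = ⋃ n, extSeq D V E n

/-- `E` is a hierarchic extension of `(⋃ n, Dn n, V)` with respect to the
partition `⟨Dn⟩`: `E = ⋃ En` where `E_0 = V` and `E_{n+1}` is an extension
of `(Dn n, En n)`. -/
def IsHierExtension {α : Type} (Dn : ℕ → Set (Dflt α)) (V E : Set (Fml α)) : Prop :=
  ∃ En : ℕ → Set (Fml α), En 0 = V ∧ (∀ n, IsExtension (Dn n) (En n) (En (n+1))) ∧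
    E = ⋃ n, En n

/-- The signed default `δ_p = ( : p⁺≡¬p⁻ / (p≡p⁺)∧(¬p≡p⁻) )`. -/
def deltap {α : Type} (p : α) : Dflt (XAtom α) where
  pre := .top
  jus := Fml.iff' (.atom (.pos p)) (.neg (.atom (.neg p)))
  con := .conj (Fml.iff' (.atom (.orig p)) (.atom (.pos p)))
               (Fml.iff' (.neg (.atom (.orig p))) (.atom (.neg p)))

/-- `D_Σ = {δ_p | p ∈ Σ}`. -/
def DSigma (α : Type) : Set (Dflt (XAtom α)) := Set.range (deltap (α := α))

/-- `Π_S = {c(δ_p) | p ∈ Σ, ¬j(δ_p) ∉ S}`. -/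
def PiSet {α : Type} (S : Set (Fml (XAtom α))) : Set (Fml (XAtom α)) :=
  {f | ∃ p : α, Fml.neg (deltap p).jus ∉ S ∧ f = (deltap p).con}

/-- The set of all extensions of `(D_Σ, W^±)`. -/
def Exts {α : Type} (W : Set (Fml α)) : Set (Set (Fml (XAtom α))) :=
  {E | IsExtension (DSigma α) (signedSet W) E}

/-- Credulous unsigned consequence `W ⊢_c φ`. -/
def CredU {α : Type} (W : Set (Fml α)) (φ : Fml α) : Prop :=
  ∃ E ∈ Exts W, emb φ ∈ Cn (signedSet W ∪ PiSet E)

/-- Skeptical unsigned consequence `W ⊢_s φ`. -/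
def SkepU {α : Type} (W : Set (Fml α)) (φ : Fml α) : Prop :=
  ∀ E ∈ Exts W, emb φ ∈ Cn (signedSet W ∪ PiSet E)

/-- Prudent unsigned consequence `W ⊢_p φ`. -/
def PrudU {α : Type} (W : Set (Fml α)) (φ : Fml α) : Prop :=
  emb φ ∈ Cn (signedSet W ∪ ⋂ E ∈ Exts W, PiSet E)

/-- Credulous signed consequence `W ⊢_c^± φ`. -/
def CredS {α : Type} (W : Set (Fml α)) (φ : Fml α) : Prop :=
  ∃ E ∈ Exts W, signed φ ∈ Cn (signedSet W ∪ PiSet E)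

/-- Skeptical signed consequence `W ⊢_s^± φ`. -/
def SkepS {α : Type} (W : Set (Fml α)) (φ : Fml α) : Prop :=
  ∀ E ∈ Exts W, signed φ ∈ Cn (signedSet W ∪ PiSet E)

/-- Prudent signed consequence `W ⊢_p^± φ`. -/
def PrudS {α : Type} (W : Set (Fml α)) (φ : Fml α) : Prop :=
  signed φ ∈ Cn (signedSet W ∪ ⋂ E ∈ Exts W, PiSet E)

def Cc {α : Type} (W : Set (Fml α)) : Set (Fml α) := {φ | CredU W φ}
def Cs {α : Type} (W : Set (Fml α)) : Set (Fml α) := {φ | SkepU W φ}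
def Cp {α : Type} (W : Set (Fml α)) : Set (Fml α) := {φ | PrudU W φ}
def CcPM {α : Type} (W : Set (Fml α)) : Set (Fml α) := {φ | CredS W φ}
def CsPM {α : Type} (W : Set (Fml α)) : Set (Fml α) := {φ | SkepS W φ}
def CpPM {α : Type} (W : Set (Fml α)) : Set (Fml α) := {φ | PrudS W φ}

/-- `J'` is a maximal subset of `J` consistent with `V`. -/
def IsMaxConsSub {α : Type} (V J' J : Set (Fml α)) : Prop :=
  J' ⊆ J ∧ Consistent (V ∪ J') ∧
    ∀ J'', J' ⊆ J'' → J'' ⊆ J → Consistent (V ∪ J'') → J'' = J'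

/-- Quantified Boolean formulas over an alphabet `α`. -/
inductive QBF (α : Type) : Type
  | atom : α → QBF α
  | top : QBF α
  | bot : QBF α
  | neg : QBF α → QBF α
  | conj : QBF α → QBF α → QBF α
  | disj : QBF α → QBF α → QBF α
  | impl : QBF α → QBF α → QBF α
  | all : α → QBF α → QBF α
  | ex : α → QBF α → QBF α

/-- Truth of a QBF under an interpretation (a set of atoms):
`∀p Ψ` is true iff `Ψ` is true with `p` set to true and with `p` set to false,
dually for `∃p Ψ`. -/
def QBF.holds {α : Type} : Set α → QBF α → Prop
  | M, .atom p => p ∈ M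
  | _, .top => True
  | _, .bot => False
  | M, .neg Φ => ¬ QBF.holds M Φ
  | M, .conj Φ Ψ => QBF.holds M Φ ∧ QBF.holds M Ψ
  | M, .disj Φ Ψ => QBF.holds M Φ ∨ QBF.holds M Ψ
  | M, .impl Φ Ψ => QBF.holds M Φ → QBF.holds M Ψ
  | M, .all p Φ => QBF.holds (M ∪ {p}) Φ ∧ QBF.holds (M \ {p}) Φ
  | M, .ex p Φ => QBF.holds (M ∪ {p}) Φ ∨ QBF.holds (M \ {p}) Φ

/-- A QBF is valid iff it is true under every interpretation. -/
def QBF.Valid {α : Type} (Φ : QBF α) : Prop := ∀ M : Set α, Φ.holds M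

/-- Propositional formulas are (quantifier-free) QBFs. -/
def Fml.toQBF {α : Type} : Fml α → QBF α
  | .atom p => .atom p
  | .top => .top
  | .bot => .bot
  | .neg φ => .neg φ.toQBF
  | .conj φ ψ => .conj φ.toQBF ψ.toQBF
  | .disj φ ψ => .disj φ.toQBF ψ.toQBF
  | .impl φ ψ => .impl φ.toQBF ψ.toQBF

/-- Conjunction of a finite list of QBFs. -/
def QBF.conjList {α : Type} (l : List (QBF α)) : QBF α := l.foldr QBF.conj QBF.top

/-- `∃P Φ`: block of existential quantifiers over the atoms in `P`. -/
def QBF.exList {α : Type} (P : List α) (Φ : QBF α) : QBF α := P.foldr QBF.ex Φ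

/-- `∀P Φ`: block of universal quantifiers over the atoms in `P`. -/
def QBF.allList {α : Type} (P : List α) (Φ : QBF α) : QBF α := P.foldr QBF.all Φ

/-- The module `C[T,S] = ∃P (T ∧ (G ≤ S))`, where `T` is given as the list `Ts`
of its elements and the pairs `(g_i, φ_i)` encode `G ≤ S = ⋀ (g_i → φ_i)`. -/
def CMod {α : Type} (P : List α) (Ts : List (Fml α)) (pairs : List (α × Fml α)) : QBF α :=
  QBF.exList P (QBF.conj (QBF.conjList (Ts.map Fml.toQBF))
    (QBF.conjList (pairs.map (fun gp => QBF.impl (QBF.atom gp.1) gp.2.toQBF))))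

/-- The module `Ext[T]` for a finite default theory `T = (D,V)` with
`D = {δ_1,…,δ_n}` and guessing atoms `g_1,…,g_n`:
`C[V, j(D)] ∧ ⋀_i (¬g_i → ¬ C[V ∪ {j(δ_i)}, j(D \ {δ_i})])`. -/
def ExtMod {α : Type} {n : ℕ} (P : List α) (Vl : List (Fml α))
    (δ : Fin n → Dflt α) (g : Fin n → α) : QBF α :=
  QBF.conj
    (CMod P Vl ((List.finRange n).map fun i => (g i, (δ i).jus)))
    (QBF.conjList ((List.finRange n).map fun i =>
      QBF.impl (QBF.neg (QBF.atom (g i)))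
        (QBF.neg (CMod P (Vl ++ [(δ i).jus])
          (((List.finRange n).filter (fun j => j != i)).map fun j => (g j, (δ j).jus))))))

/-- The module `Conseq[T,φ] = ∀P' (V ∧ (G ≤ c(D)) → φ)`. -/
def ConseqMod {α : Type} {n : ℕ} (P' : List α) (Vl : List (Fml α))
    (δ : Fin n → Dflt α) (g : Fin n → α) (φ : Fml α) : QBF α :=
  QBF.allList P'
    (QBF.impl
      (QBF.conj (QBF.conjList (Vl.map Fml.toQBF))
        (QBF.conjList ((List.finRange n).map fun i =>
          QBF.impl (QBF.atom (g i)) (δ i).con.toQBF)))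
      φ.toQBF)


/-! ### Auxiliary lemmas -/

section Aux

variable {α β : Type}

lemma subset_Cn {S : Set (Fml β)} : S ⊆ Cn S := fun _ h M hM => hM _ h

lemma Cn_mono {S T : Set (Fml β)} (h : S ⊆ T) : Cn S ⊆ Cn T :=
  fun _ hφ M hM => hφ M (fun ψ hψ => hM ψ (h hψ))

lemma Cn_of_subset_Cn {S T : Set (Fml β)} (h : S ⊆ Cn T) : Cn S ⊆ Cn T :=
  fun _ hφ M hM => hφ M (fun ψ hψ => h hψ M hM)

lemma consistent_iff {S : Set (Fml β)} :
    Consistent S ↔ ∃ M : Set β, ∀ ψ ∈ S, ψ.holds M := by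
  unfold Consistent Cn Entails
  constructor
  · intro h
    by_contra hc
    push_neg at hc
    exact h (fun M hM => by
      rcases hc M with ⟨ψ, hψ, hh⟩
      exact absurd (hM ψ hψ) hh)
  · rintro ⟨M, hM⟩ h
    exact h M hM

lemma Cn_univ_of_inconsistent {S : Set (Fml β)} (h : ¬ Consistent S) :
    Cn S = Set.univ := by
  rw [consistent_iff] at h
  push_neg at h
  ext φ
  simp only [Set.mem_univ, iff_true]
  intro M hM
  rcases h M with ⟨ψ, hψ, hh⟩
  exact absurd (hM ψ hψ) hh

lemma holds_congr {M N : Set β} : ∀ {ψ : Fml β},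
    (∀ a ∈ ψ.atoms, (a ∈ M ↔ a ∈ N)) → (ψ.holds M ↔ ψ.holds N) := by
  intro ψ
  induction ψ with
  | atom p => intro h; exact h p rfl
  | top => intro _; exact Iff.rfl
  | bot => intro _; exact Iff.rfl
  | neg ψ ih => intro h; simp only [Fml.holds]; rw [ih h]
  | conj ψ χ ih1 ih2 =>
      intro h; simp only [Fml.holds]
      rw [ih1 (fun a ha => h a (Or.inl ha)), ih2 (fun a ha => h a (Or.inr ha))]
  | disj ψ χ ih1 ih2 =>
      intro h; simp only [Fml.holds]
      rw [ih1 (fun a ha => h a (Or.inl ha)), ih2 (fun a ha => h a (Or.inr ha))]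
  | impl ψ χ ih1 ih2 =>
      intro h; simp only [Fml.holds]
      rw [ih1 (fun a ha => h a (Or.inl ha)), ih2 (fun a ha => h a (Or.inr ha))]

lemma atoms_finite (ψ : Fml β) : ψ.atoms.Finite := by
  induction ψ with
  | atom p => exact Set.finite_singleton p
  | top => exact Set.finite_empty
  | bot => exact Set.finite_empty
  | neg ψ ih => exact ih
  | conj ψ χ ih1 ih2 => exact ih1.union ih2
  | disj ψ χ ih1 ih2 => exact ih1.union ih2
  | impl ψ χ ih1 ih2 => exact ih1.union ih2

lemma vars_finite {W : Set (Fml β)} (hW : W.Finite) : (vars W).Finite :=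
  Set.Finite.biUnion hW (fun ψ _ => atoms_finite ψ)

lemma atoms_map (f : β → α) (ψ : Fml β) : (ψ.map f).atoms = f '' ψ.atoms := by
  induction ψ with
  | atom p => simp [Fml.map, Fml.atoms]
  | top => simp [Fml.map, Fml.atoms]
  | bot => simp [Fml.map, Fml.atoms]
  | neg ψ ih => simpa [Fml.map, Fml.atoms] using ih
  | conj ψ χ ih1 ih2 => simp [Fml.map, Fml.atoms, ih1, ih2, Set.image_union]
  | disj ψ χ ih1 ih2 => simp [Fml.map, Fml.atoms, ih1, ih2, Set.image_union]
  | impl ψ χ ih1 ih2 => simp [Fml.map, Fml.atoms, ih1, ih2, Set.image_union]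

lemma atoms_signedAux (ψ : Fml β) : ∀ b, ∀ x ∈ (signedAux ψ b).atoms,
    ∃ p ∈ ψ.atoms, x = XAtom.pos p ∨ x = XAtom.neg p := by
  induction ψ with
  | atom p =>
      intro b x hx
      cases b <;> simp [signedAux, Fml.atoms] at hx <;>
        exact ⟨p, rfl, by simp [hx]⟩
  | top => intro b x hx; simp [signedAux, Fml.atoms] at hx
  | bot => intro b x hx; simp [signedAux, Fml.atoms] at hx
  | neg ψ ih => intro b x hx; exact ih (!b) x hx
  | conj ψ χ ih1 ih2 =>
      intro b x hx
      rcases hx with hx | hx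
      · rcases ih1 b x hx with ⟨p, hp, h⟩; exact ⟨p, Or.inl hp, h⟩
      · rcases ih2 b x hx with ⟨p, hp, h⟩; exact ⟨p, Or.inr hp, h⟩
  | disj ψ χ ih1 ih2 =>
      intro b x hx
      rcases hx with hx | hx
      · rcases ih1 b x hx with ⟨p, hp, h⟩; exact ⟨p, Or.inl hp, h⟩
      · rcases ih2 b x hx with ⟨p, hp, h⟩; exact ⟨p, Or.inr hp, h⟩
  | impl ψ χ ih1 ih2 =>
      intro b x hx
      rcases hx with hx | hx
      · rcases ih1 (!b) x hx with ⟨p, hp, h⟩; exact ⟨p, Or.inl hp, h⟩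
      · rcases ih2 b x hx with ⟨p, hp, h⟩; exact ⟨p, Or.inr hp, h⟩

end Aux

section Surgery

variable {α : Type}

/-- Justification of `δ_p`, abbreviated. -/
def jus' (p : α) : Fml (XAtom α) := (deltap p).jus

/-- Consequent of `δ_p`, abbreviated. -/
def con' (p : α) : Fml (XAtom α) := (deltap p).con

/-- `c(T)` as a set of formulas. -/
def cV (T : Set α) : Set (Fml (XAtom α)) := con' '' T

/-- `j(T)` as a set of formulas. -/
def jV (T : Set α) : Set (Fml (XAtom α)) := jus' '' T

lemma holds_jus' {M : Set (XAtom α)} {p : α} :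
    (jus' p).holds M ↔ (XAtom.pos p ∈ M ↔ XAtom.neg p ∉ M) := by
  simp only [jus', deltap, Fml.iff', Fml.holds]
  tauto

lemma holds_con' {M : Set (XAtom α)} {p : α} :
    (con' p).holds M ↔
      ((XAtom.orig p ∈ M ↔ XAtom.pos p ∈ M) ∧ (XAtom.orig p ∉ M ↔ XAtom.neg p ∈ M)) := by
  simp only [con', deltap, Fml.iff', Fml.holds]
  tauto

lemma holds_jus'_of_con' {M : Set (XAtom α)} {p : α} (h : (con' p).holds M) :
    (jus' p).holds M := by
  rw [holds_con'] at h
  rw [holds_jus']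
  tauto

lemma atoms_jus' {p : α} {x : XAtom α} :
    x ∈ (jus' p).atoms ↔ (x = XAtom.pos p ∨ x = XAtom.neg p) := by
  simp [jus', deltap, Fml.iff', Fml.atoms]
  tauto

lemma atoms_con' {p : α} {x : XAtom α} :
    x ∈ (con' p).atoms ↔ (x = XAtom.orig p ∨ x = XAtom.pos p ∨ x = XAtom.neg p) := by
  simp [con', deltap, Fml.iff', Fml.atoms]
  tauto

lemma con'_inj {p q : α} (h : con' p = con' q) : p = q := by
  simp only [con', deltap, Fml.iff'] at h
  injection h with h1 h2
  injection h1 with h3 h4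
  injection h3 with h5 h6
  injection h5 with h7
  injection h7

lemma deltap_inj {p q : α} (h : deltap p = deltap q) : p = q :=
  con'_inj (by rw [con', con', h])

/-- Surgery on the `orig` atoms of `T`: set `orig p := (pos p ∈ M)` for `p ∈ T`. -/
def fixOrig (T : Set α) (M : Set (XAtom α)) : Set (XAtom α) := fun x =>
  match x with
  | .orig p => (p ∈ T ∧ XAtom.pos p ∈ M) ∨ (p ∉ T ∧ XAtom.orig p ∈ M)
  | .pos p => XAtom.pos p ∈ M
  | .neg p => XAtom.neg p ∈ M

/-- Surgery on the signed atoms of `Q`: set `pos q := (orig q ∈ M)`,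
`neg q := (orig q ∉ M)` for `q ∈ Q`. -/
def fixSign (Q : Set α) (M : Set (XAtom α)) : Set (XAtom α) := fun x =>
  match x with
  | .orig p => XAtom.orig p ∈ M
  | .pos p => (p ∈ Q ∧ XAtom.orig p ∈ M) ∨ (p ∉ Q ∧ XAtom.pos p ∈ M)
  | .neg p => (p ∈ Q ∧ XAtom.orig p ∉ M) ∨ (p ∉ Q ∧ XAtom.neg p ∈ M)

lemma holds_fixOrig {T : Set α} {M : Set (XAtom α)} {ψ : Fml (XAtom α)}
    (h : ∀ p ∈ T, XAtom.orig p ∉ ψ.atoms) :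
    ψ.holds (fixOrig T M) ↔ ψ.holds M := by
  apply holds_congr
  intro a ha
  cases a with
  | orig p =>
      have hp : p ∉ T := fun hc => h p hc ha
      show ((p ∈ T ∧ _) ∨ (p ∉ T ∧ _)) ↔ _
      tauto
  | pos p => exact Iff.rfl
  | neg p => exact Iff.rfl

lemma holds_fixSign {Q : Set α} {M : Set (XAtom α)} {ψ : Fml (XAtom α)}
    (h : ∀ q ∈ Q, XAtom.pos q ∉ ψ.atoms ∧ XAtom.neg q ∉ ψ.atoms) :
    ψ.holds (fixSign Q M) ↔ ψ.holds M := by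
  apply holds_congr
  intro a ha
  cases a with
  | orig p => exact Iff.rfl
  | pos p =>
      have hp : p ∉ Q := fun hc => (h p hc).1 ha
      show ((p ∈ Q ∧ _) ∨ (p ∉ Q ∧ _)) ↔ _
      tauto
  | neg p =>
      have hp : p ∉ Q := fun hc => (h p hc).2 ha
      show ((p ∈ Q ∧ _) ∨ (p ∉ Q ∧ _)) ↔ _
      tauto

lemma mem_fixOrig_orig {T : Set α} {M : Set (XAtom α)} {p : α} :
    XAtom.orig p ∈ fixOrig T M ↔ ((p ∈ T ∧ XAtom.pos p ∈ M) ∨ (p ∉ T ∧ XAtom.orig p ∈ M)) :=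
  Iff.rfl

lemma mem_fixOrig_pos {T : Set α} {M : Set (XAtom α)} {p : α} :
    XAtom.pos p ∈ fixOrig T M ↔ XAtom.pos p ∈ M := Iff.rfl

lemma mem_fixOrig_neg {T : Set α} {M : Set (XAtom α)} {p : α} :
    XAtom.neg p ∈ fixOrig T M ↔ XAtom.neg p ∈ M := Iff.rfl

lemma mem_fixSign_orig {Q : Set α} {M : Set (XAtom α)} {p : α} :
    XAtom.orig p ∈ fixSign Q M ↔ XAtom.orig p ∈ M := Iff.rfl

lemma mem_fixSign_pos {Q : Set α} {M : Set (XAtom α)} {p : α} :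
    XAtom.pos p ∈ fixSign Q M ↔ ((p ∈ Q ∧ XAtom.orig p ∈ M) ∨ (p ∉ Q ∧ XAtom.pos p ∈ M)) :=
  Iff.rfl

lemma mem_fixSign_neg {Q : Set α} {M : Set (XAtom α)} {p : α} :
    XAtom.neg p ∈ fixSign Q M ↔ ((p ∈ Q ∧ XAtom.orig p ∉ M) ∨ (p ∉ Q ∧ XAtom.neg p ∈ M)) :=
  Iff.rfl

lemma fixOrig_con' {T : Set α} {M : Set (XAtom α)} {p : α} (hp : p ∈ T)
    (hj : (jus' p).holds M) : (con' p).holds (fixOrig T M) := by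
  rw [holds_jus'] at hj
  rw [holds_con', mem_fixOrig_orig, mem_fixOrig_pos, mem_fixOrig_neg]
  tauto

lemma fixOrig_jus' {T : Set α} {M : Set (XAtom α)} {p : α} :
    (jus' p).holds (fixOrig T M) ↔ (jus' p).holds M :=
  holds_fixOrig (by intro q _ hq; rw [atoms_jus'] at hq; rcases hq with h | h <;> cases h)

lemma fixSign_con' {Q : Set α} {M : Set (XAtom α)} {q : α} (hq : q ∈ Q) :
    (con' q).holds (fixSign Q M) := by
  rw [holds_con', mem_fixSign_orig, mem_fixSign_pos, mem_fixSign_neg]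
  tauto

lemma fixSign_jus' {Q : Set α} {M : Set (XAtom α)} {q : α} (hq : q ∈ Q) :
    (jus' q).holds (fixSign Q M) :=
  holds_jus'_of_con' (fixSign_con' hq)

lemma fixSign_jus'_iff {α : Type} {Q : Set α} {M : Set (XAtom α)} {p : α} (hp : p ∉ Q) :
    (jus' p).holds (fixSign Q M) ↔ (jus' p).holds M := by
  apply holds_fixSign
  intro q hq
  constructor <;> rw [atoms_jus'] <;> rintro (h | h) <;>
    first
      | (injection h with h'; exact hp (h' ▸ hq))
      | injection h

lemma fixSign_con'_iff {α : Type} {Q : Set α} {M : Set (XAtom α)} {p : α} (hp : p ∉ Q) :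
    (con' p).holds (fixSign Q M) ↔ (con' p).holds M := by
  apply holds_fixSign
  intro q hq
  constructor <;> rw [atoms_con'] <;> rintro (h | h | h) <;>
    first
      | (injection h with h'; exact hp (h' ▸ hq))
      | injection h

lemma fixOrig_con'_iff {α : Type} {T : Set α} {M : Set (XAtom α)} {p : α} (hp : p ∉ T) :
    (con' p).holds (fixOrig T M) ↔ (con' p).holds M := by
  apply holds_fixOrig
  intro q hq
  rw [atoms_con']
  rintro (h | h | h)
  · injection h with h'; exact hp (h' ▸ hq)
  · injection h
  · injection h

end Surgery

section ExtChar

variable {β : Type}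

lemma extSeq_mono (D : Set (Dflt β)) (V E : Set (Fml β)) (n : ℕ) :
    extSeq D V E n ⊆ extSeq D V E (n+1) := by
  intro ψ h
  exact Set.mem_union_left _ (subset_Cn h)

lemma isExtension_iff {D : Set (Dflt β)} (hD : ∀ d ∈ D, d.pre = Fml.top)
    (V E : Set (Fml β)) :
    IsExtension D V E ↔ E = Cn (V ∪ {γ | ∃ d ∈ D, d.con = γ ∧ Fml.neg d.jus ∉ E}) := by
  set Γ := {γ | ∃ d ∈ D, d.con = γ ∧ Fml.neg d.jus ∉ E} with hΓ
  have hsub : ∀ n, extSeq D V E n ⊆ Cn (V ∪ Γ) := by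
    intro n
    induction n with
    | zero => exact (Set.subset_union_left).trans subset_Cn
    | succ n ih =>
        intro ψ hψ
        rcases hψ with hψ | hψ
        · exact Cn_of_subset_Cn ih hψ
        · rcases hψ with ⟨d, hd, hγ, _, hj⟩
          exact subset_Cn (Set.mem_union_right _ ⟨d, hd, hγ, hj⟩)
  have htop : Fml.top ∈ extSeq D V E 1 :=
    Set.mem_union_left _ (fun M _ => trivial)
  have hΓ2 : Γ ⊆ extSeq D V E 2 := by
    rintro γ ⟨d, hd, hγ, hj⟩
    exact Set.mem_union_right _ ⟨d, hd, hγ, by rw [hD d hd]; exact htop, hj⟩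
  have hV2 : V ⊆ extSeq D V E 2 :=
    (extSeq_mono D V E 0).trans (extSeq_mono D V E 1)
  have hmain : (⋃ n, extSeq D V E n) = Cn (V ∪ Γ) := by
    apply subset_antisymm
    · exact Set.iUnion_subset hsub
    · intro ψ hψ
      have h3 : ψ ∈ extSeq D V E 3 :=
        Set.mem_union_left _ (Cn_mono (Set.union_subset hV2 hΓ2) hψ)
      exact Set.mem_iUnion.2 ⟨3, h3⟩
  rw [IsExtension, hmain]

end ExtChar

section DeltaExt

variable {α : Type}

lemma isExtension_deltap_iff (B : Set α) (V E : Set (Fml (XAtom α))) :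
    IsExtension (deltap '' B) V E ↔
      E = Cn (V ∪ cV {p ∈ B | Fml.neg (jus' p) ∉ E}) := by
  have hD : ∀ d ∈ deltap '' B, d.pre = Fml.top := by
    rintro d ⟨p, _, rfl⟩; rfl
  rw [isExtension_iff hD]
  have hΓ : {γ | ∃ d ∈ deltap '' B, d.con = γ ∧ Fml.neg d.jus ∉ E}
      = cV {p ∈ B | Fml.neg (jus' p) ∉ E} := by
    ext γ
    constructor
    · rintro ⟨d, ⟨p, hp, rfl⟩, hγ, hj⟩
      exact ⟨p, ⟨hp, hj⟩, hγ⟩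
    · rintro ⟨p, ⟨hp, hj⟩, rfl⟩
      exact ⟨deltap p, ⟨p, hp, rfl⟩, rfl, hj⟩
  rw [hΓ]

end DeltaExt

/-- `V` only uses signed atoms of `A`. -/
def SignedOver {α : Type} (V : Set (Fml (XAtom α))) (A : Set α) : Prop :=
  ∀ ψ ∈ V, ∀ x ∈ ψ.atoms, ∃ p ∈ A, x = XAtom.pos p ∨ x = XAtom.neg p

/-- `T` is a subset of `A` whose justifications are consistent with `V`. -/
def Good {α : Type} (V : Set (Fml (XAtom α))) (A T : Set α) : Prop :=
  T ⊆ A ∧ Consistent (V ∪ jV T)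

/-- `T` is maximal such. -/
def MaxT {α : Type} (V : Set (Fml (XAtom α))) (A T : Set α) : Prop :=
  Good V A T ∧ ∀ T', Good V A T' → T ⊆ T' → T' = T

section Main

variable {α : Type}

lemma holds_fixSign_of_signedOver {V : Set (Fml (XAtom α))} {A : Set α}
    (hVA : SignedOver V A) {Q : Set α} (hQ : ∀ q ∈ Q, q ∉ A) {M : Set (XAtom α)}
    {ψ : Fml (XAtom α)} (hψ : ψ ∈ V) :
    ψ.holds (fixSign Q M) ↔ ψ.holds M := by
  apply holds_fixSign
  intro q hq
  constructor
  · intro hc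
    rcases hVA ψ hψ _ hc with ⟨p, hpA, (h | h)⟩
    · injection h with h'; exact hQ q hq (h' ▸ hpA)
    · injection h
  · intro hc
    rcases hVA ψ hψ _ hc with ⟨p, hpA, (h | h)⟩
    · injection h
    · injection h with h'; exact hQ q hq (h' ▸ hpA)

lemma holds_fixOrig_of_signedOver {V : Set (Fml (XAtom α))} {A : Set α}
    (hVA : SignedOver V A) {T : Set α} {M : Set (XAtom α)}
    {ψ : Fml (XAtom α)} (hψ : ψ ∈ V) :
    ψ.holds (fixOrig T M) ↔ ψ.holds M := by
  apply holds_fixOrig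
  intro p _ hc
  rcases hVA ψ hψ _ hc with ⟨r, _, (h | h)⟩ <;> injection h

lemma model_glue {V : Set (Fml (XAtom α))} {A : Set α} (hVA : SignedOver V A)
    {M : Set (XAtom α)} {T U : Set α} (hT : T ⊆ A) (hU : ∀ q ∈ U, q ∉ A)
    (hMV : ∀ ψ ∈ V, ψ.holds M) (hMj : ∀ p ∈ T, (jus' p).holds M) :
    ∃ M' : Set (XAtom α), (∀ ψ ∈ V, ψ.holds M') ∧ (∀ p ∈ T ∪ U, (con' p).holds M') ∧
      (∀ p, p ∉ U → ((jus' p).holds M' ↔ (jus' p).holds M)) := by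
  refine ⟨fixOrig (T ∪ U) (fixSign U M), ?_, ?_, ?_⟩
  · intro ψ hψ
    rw [holds_fixOrig_of_signedOver hVA hψ, holds_fixSign_of_signedOver hVA hU hψ]
    exact hMV ψ hψ
  · intro p hp
    apply fixOrig_con' hp
    rcases hp with hpT | hpU
    · rw [fixSign_jus'_iff (fun hc => hU p hc (hT hpT))]
      exact hMj p hpT
    · exact fixSign_jus' hpU
  · intro p hpU
    rw [fixOrig_jus', fixSign_jus'_iff hpU]

lemma extension_of_max {V : Set (Fml (XAtom α))} {A : Set α} (hVA : SignedOver V A)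
    {B : Set α} (hAB : A ⊆ B) {T : Set α} (hT : MaxT V A T) :
    (∀ p, (p ∈ B ∧ Fml.neg (jus' p) ∉ Cn (V ∪ cV (T ∪ (B \ A)))) ↔ p ∈ T ∪ (B \ A)) ∧
    Consistent (V ∪ cV (T ∪ (B \ A))) ∧
    IsExtension (deltap '' B) V (Cn (V ∪ cV (T ∪ (B \ A)))) := by
  obtain ⟨⟨hTA, hTcons⟩, hTmax⟩ := hT
  set S := T ∪ (B \ A) with hS
  obtain ⟨M, hM⟩ := consistent_iff.1 hTcons
  have hMV : ∀ ψ ∈ V, ψ.holds M := fun ψ hψ => hM ψ (Set.mem_union_left _ hψ)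
  have hMj : ∀ p ∈ T, (jus' p).holds M := fun p hp =>
    hM _ (Set.mem_union_right _ ⟨p, hp, rfl⟩)
  obtain ⟨M', hM'V, hM'c, _⟩ := model_glue hVA hTA (fun q (hq : q ∈ B \ A) => hq.2) hMV hMj
  have hmodel : ∀ ψ ∈ V ∪ cV S, ψ.holds M' := by
    rintro ψ (hψ | ⟨p, hp, rfl⟩)
    · exact hM'V ψ hψ
    · exact hM'c p hp
  have hfix1 : ∀ p ∈ S, Fml.neg (jus' p) ∉ Cn (V ∪ cV S) := by
    intro p hp hmem
    exact (hmem M' hmodel) (holds_jus'_of_con' (hM'c p hp))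
  have hfix2 : ∀ p ∈ B, p ∉ S → Fml.neg (jus' p) ∈ Cn (V ∪ cV S) := by
    intro p hpB hpS N hN hjp
    have hpA : p ∈ A := by
      by_contra hpA
      exact hpS (Or.inr ⟨hpB, hpA⟩)
    have hpT : p ∉ T := fun hc => hpS (Or.inl hc)
    have hgood : Good V A (insert p T) := by
      refine ⟨Set.insert_subset_iff.2 ⟨hpA, hTA⟩, consistent_iff.2 ⟨N, ?_⟩⟩
      rintro ψ (hψ | ⟨q, hq, rfl⟩)
      · exact hN ψ (Set.mem_union_left _ hψ)
      · rcases Set.mem_insert_iff.1 hq with rfl | hq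
        · exact hjp
        · exact holds_jus'_of_con' (hN _ (Set.mem_union_right _ ⟨q, Or.inl hq, rfl⟩))
    have heq := hTmax _ hgood (Set.subset_insert p T)
    exact hpT (heq ▸ Set.mem_insert p T)
  have hchar : ∀ p, (p ∈ B ∧ Fml.neg (jus' p) ∉ Cn (V ∪ cV S)) ↔ p ∈ S := by
    intro p
    constructor
    · rintro ⟨hpB, hpn⟩
      by_contra hpS
      exact hpn (hfix2 p hpB hpS)
    · intro hp
      refine ⟨?_, hfix1 p hp⟩
      rcases hp with hp | hp
      · exact hAB (hTA hp)
      · exact hp.1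
  refine ⟨hchar, consistent_iff.2 ⟨M', hmodel⟩, ?_⟩
  rw [isExtension_deltap_iff]
  have hset : {p ∈ B | Fml.neg (jus' p) ∉ Cn (V ∪ cV S)} = S := by
    ext p
    rw [Set.mem_setOf_eq]
    exact hchar p
  rw [hset]

lemma max_of_extension {V : Set (Fml (XAtom α))} {A : Set α} (hVA : SignedOver V A)
    (hVc : Consistent V) {B : Set α} (hAB : A ⊆ B) {E : Set (Fml (XAtom α))}
    (hE : IsExtension (deltap '' B) V E) :
    E = Cn (V ∪ cV {p ∈ B | Fml.neg (jus' p) ∉ E}) ∧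
    Consistent (V ∪ cV {p ∈ B | Fml.neg (jus' p) ∉ E}) ∧
    B \ A ⊆ {p ∈ B | Fml.neg (jus' p) ∉ E} ∧
    MaxT V A ({p ∈ B | Fml.neg (jus' p) ∉ E} ∩ A) ∧
    {p ∈ B | Fml.neg (jus' p) ∉ E} =
      ({p ∈ B | Fml.neg (jus' p) ∉ E} ∩ A) ∪ (B \ A) := by
  set S := {p ∈ B | Fml.neg (jus' p) ∉ E} with hSdef
  have hEq : E = Cn (V ∪ cV S) := (isExtension_deltap_iff B V E).1 hE
  have hcons : Consistent (V ∪ cV S) := by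
    by_contra hc
    have huniv : E = Set.univ := by rw [hEq]; exact Cn_univ_of_inconsistent hc
    have hSempty : S = ∅ := by
      ext p
      simp only [hSdef, Set.mem_setOf_eq, Set.mem_empty_iff_false, iff_false, not_and]
      intro _ hn
      exact hn (huniv ▸ Set.mem_univ _)
    rw [hSempty] at hEq
    have hECnV : E = Cn V := by
      have : cV (∅ : Set α) = ∅ := Set.image_empty _
      rw [this, Set.union_empty] at hEq
      exact hEq
    exact hVc (by rw [← hECnV, huniv]; trivial)
  obtain ⟨M, hM⟩ := consistent_iff.1 hcons
  have hMV : ∀ ψ ∈ V, ψ.holds M := fun ψ hψ => hM ψ (Set.mem_union_left _ hψ)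
  have hMc : ∀ p ∈ S, (con' p).holds M := fun p hp =>
    hM _ (Set.mem_union_right _ ⟨p, hp, rfl⟩)
  have hBA : B \ A ⊆ S := by
    intro q hq
    have hqnotA : q ∉ A := hq.2
    refine ⟨hq.1, ?_⟩
    intro hmem
    have hqS : q ∉ S := fun hc => hc.2 hmem
    have hmem' : Entails (V ∪ cV S) (Fml.neg (jus' q)) := by rw [hEq] at hmem; exact hmem
    have hNmod : ∀ ψ ∈ V ∪ cV S, ψ.holds (fixSign {q} M) := by
      rintro ψ (hψ | ⟨r, hr, rfl⟩)
      · rw [holds_fixSign_of_signedOver hVA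
          (fun x hx => by rw [Set.mem_singleton_iff.1 hx]; exact hqnotA) hψ]
        exact hMV ψ hψ
      · rw [fixSign_con'_iff (fun hc => hqS (by rwa [Set.mem_singleton_iff.1 hc] at hr))]
        exact hMc r hr
    exact (hmem' _ hNmod) (fixSign_jus' (Set.mem_singleton q))
  have hSsplit : S = (S ∩ A) ∪ (B \ A) := by
    apply Set.Subset.antisymm
    · intro r hr
      by_cases hrA : r ∈ A
      · exact Or.inl ⟨hr, hrA⟩
      · exact Or.inr ⟨hr.1, hrA⟩
    · exact Set.union_subset (Set.inter_subset_left) hBA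
  have hgoodT : Good V A (S ∩ A) := by
    refine ⟨Set.inter_subset_right, consistent_iff.2 ⟨M, ?_⟩⟩
    rintro ψ (hψ | ⟨r, hr, rfl⟩)
    · exact hMV ψ hψ
    · exact holds_jus'_of_con' (hMc r hr.1)
  have hmaxT : MaxT V A (S ∩ A) := by
    refine ⟨hgoodT, ?_⟩
    intro T' hT' hsub
    apply Set.Subset.antisymm _ hsub
    intro p hpT'
    have hpA : p ∈ A := hT'.1 hpT'
    refine ⟨?_, hpA⟩
    by_contra hpS
    have hnj : Fml.neg (jus' p) ∈ E := by
      by_contra hn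
      exact hpS ⟨hAB hpA, hn⟩
    obtain ⟨N, hN⟩ := consistent_iff.1 hT'.2
    have hNV : ∀ ψ ∈ V, ψ.holds N := fun ψ hψ => hN ψ (Set.mem_union_left _ hψ)
    have hNj : ∀ r ∈ S ∩ A, (jus' r).holds N := fun r hr =>
      hN _ (Set.mem_union_right _ ⟨r, hsub hr, rfl⟩)
    obtain ⟨N', hN'V, hN'c, hN'j⟩ :=
      model_glue hVA (Set.inter_subset_right) (fun q (hq : q ∈ B \ A) => hq.2) hNV hNj
    have hN'mod : ∀ ψ ∈ V ∪ cV S, ψ.holds N' := by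
      rintro ψ (hψ | ⟨r, hr, rfl⟩)
      · exact hN'V ψ hψ
      · exact hN'c r (hSsplit ▸ hr)
    have hjp : (jus' p).holds N' := by
      rw [hN'j p (fun hc => hc.2 hpA)]
      exact hN _ (Set.mem_union_right _ ⟨p, hpT', rfl⟩)
    exact ((hEq ▸ hnj) N' hN'mod) hjp
  exact ⟨hEq, hcons, hBA, hmaxT, hSsplit⟩

lemma flip_not_con' {V : Set (Fml (XAtom α))} {A T : Set α} (hVA : SignedOver V A)
    {M : Set (XAtom α)} (hM : ∀ ψ ∈ V ∪ cV T, ψ.holds M) {p : α} (hpT : p ∉ T) :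
    ∃ N, (∀ ψ ∈ V ∪ cV T, ψ.holds N) ∧ ¬ (con' p).holds N := by
  set N : Set (XAtom α) :=
    {x | (x = XAtom.orig p ∧ XAtom.pos p ∉ M) ∨ (x ≠ XAtom.orig p ∧ x ∈ M)} with hN
  have hagree : ∀ ψ : Fml (XAtom α), XAtom.orig p ∉ ψ.atoms →
      (ψ.holds N ↔ ψ.holds M) := by
    intro ψ hψ
    apply holds_congr
    intro a ha
    have hne : a ≠ XAtom.orig p := fun hc => hψ (hc ▸ ha)
    show ((a = _ ∧ _) ∨ (a ≠ _ ∧ _)) ↔ _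
    tauto
  refine ⟨N, ?_, ?_⟩
  · rintro ψ (hψ | ⟨r, hr, rfl⟩)
    · rw [hagree ψ ?_]
      · exact hM ψ (Set.mem_union_left _ hψ)
      · intro hc; rcases hVA ψ hψ _ hc with ⟨q, _, (h | h)⟩ <;> injection h
    · rw [hagree _ ?_]
      · exact hM _ (Set.mem_union_right _ ⟨r, hr, rfl⟩)
      · intro hc
        rw [atoms_con'] at hc
        rcases hc with h | h | h
        · injection h with h'; exact hpT (by rw [h']; exact hr)
        · injection h
        · injection h
  · rw [holds_con']
    intro hcon
    have h1 : XAtom.orig p ∈ N ↔ XAtom.pos p ∉ M := by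
      show ((_ = _ ∧ _) ∨ (_ ≠ _ ∧ _)) ↔ _
      constructor
      · rintro (⟨_, h⟩ | ⟨hc, _⟩)
        · exact h
        · exact absurd rfl hc
      · intro h
        exact Or.inl ⟨rfl, h⟩
    have h2 : XAtom.pos p ∈ N ↔ XAtom.pos p ∈ M := by
      show ((_ = _ ∧ _) ∨ (_ ≠ _ ∧ _)) ↔ _
      constructor
      · rintro (⟨h, _⟩ | ⟨_, h⟩)
        · injection h
        · exact h
      · intro h
        exact Or.inr ⟨fun hc => by injection hc, h⟩
    rw [h1, h2] at hcon
    tauto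

lemma con'_not_entailed {V : Set (Fml (XAtom α))} {A T : Set α} (hVA : SignedOver V A)
    (hcons : Consistent (V ∪ cV T)) {p : α} (hpT : p ∉ T) :
    (deltap p).con ∉ Cn (V ∪ cV T) := by
  intro hmem
  obtain ⟨M, hM⟩ := consistent_iff.1 hcons
  obtain ⟨N, hN, hNp⟩ := flip_not_con' hVA hM hpT
  exact hNp (hmem N hN)

end Main

/-- For finite `W ⊆ L_Σ`, `D_W = {δ_p | p ∈ var(W)}` and each
`φ ∈ L_Σ`: `W ⊬_p φ` iff there is `C ⊆ D_W` with `φ ∉ Cn(W^± ∪ c(C))` and,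
for each `δ ∈ D_W \ C`, some extension `E` of `(D_W, W^±)` with `c(δ) ∉ E`. -/
theorem prudent_characterisation {α : Type} (W : Set (Fml α)) (hW : W.Finite)
    (φ : Fml α) :
    ¬ PrudU W φ ↔
      ∃ C ⊆ deltap '' vars W,
        emb φ ∉ Cn (signedSet W ∪ Dflt.con '' C) ∧
        ∀ d ∈ (deltap '' vars W) \ C,
          ∃ E, IsExtension (deltap '' vars W) (signedSet W) E ∧ d.con ∉ E := by
  classical
  set A := vars W with hAdef
  set V := signedSet W with hVdef
  have hVA : SignedOver V A := by
    rintro ψ ⟨w, hw, rfl⟩ x hx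
    rcases atoms_signedAux w true x hx with ⟨p, hp, h⟩
    exact ⟨p, Set.mem_biUnion hw hp, h⟩
  by_cases hVc : Consistent V
  · -- consistent case
    have hAfin : A.Finite := vars_finite hW
    set I : Set α := {p | ∀ T, MaxT V A T → p ∈ T} with hI
    obtain ⟨T₀, hT₀⟩ : ∃ T, MaxT V A T := by
      have hfin : {T | Good V A T}.Finite :=
        (Set.Finite.finite_subsets hAfin).subset (fun T hT => hT.1)
      have hne : (∅ : Set α) ∈ {T | Good V A T} := by
        refine ⟨Set.empty_subset A, ?_⟩
        have hemp : jV (∅ : Set α) = ∅ := Set.image_empty _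
        rw [hemp, Set.union_empty]
        exact hVc
      obtain ⟨T₀, hT₀g, hmax⟩ := Set.Finite.exists_maximalFor id _ hfin ⟨∅, hne⟩
      exact ⟨T₀, hT₀g, fun T' hT' hsub => Set.Subset.antisymm (hmax hT' hsub) hsub⟩
    have hIsub : I ⊆ A := fun p hp => hT₀.1.1 (hp T₀ hT₀)
    have hrange : DSigma α = deltap '' (Set.univ : Set α) := (Set.image_univ).symm
    have hExtsMem : ∀ T, MaxT V A T →
        Cn (V ∪ cV (T ∪ (Set.univ \ A))) ∈ Exts W := by
      intro T hT
      show IsExtension (DSigma α) (signedSet W) _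
      rw [hrange]
      exact (extension_of_max hVA (Set.subset_univ A) hT).2.2
    -- the intersection of the Π-sets
    have hInter : (⋂ E ∈ Exts W, PiSet E) = cV (I ∪ (Set.univ \ A)) := by
      apply Set.Subset.antisymm
      · intro f hf
        obtain ⟨hchar₀, _, _⟩ := extension_of_max hVA (Set.subset_univ A) hT₀
        obtain ⟨p, hpj, hfeq⟩ := Set.mem_iInter₂.1 hf _ (hExtsMem T₀ hT₀)
        refine ⟨p, ?_, hfeq.symm⟩
        by_cases hpA : p ∈ A
        · left
          simp only [hI, Set.mem_setOf_eq]
          intro T hT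
          obtain ⟨hcharT, _, _⟩ := extension_of_max hVA (Set.subset_univ A) hT
          obtain ⟨q, hqj, hqeq⟩ := Set.mem_iInter₂.1 hf _ (hExtsMem T hT)
          have hpq : p = q := con'_inj (hfeq.symm.trans hqeq)
          rcases (hcharT q).1 ⟨Set.mem_univ q, hqj⟩ with hqT | hqU
          · exact hpq ▸ hqT
          · exact absurd (hpq ▸ hpA) hqU.2
        · right
          exact ⟨Set.mem_univ p, hpA⟩
      · rintro f ⟨p, hp, rfl⟩
        apply Set.mem_iInter₂.2
        intro E hE
        have hE' : IsExtension (deltap '' (Set.univ : Set α)) V E := by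
          rw [← hrange]
          exact hE
        obtain ⟨_, _, hBA, hmaxT, _⟩ :=
          max_of_extension hVA hVc (Set.subset_univ A) hE'
        refine ⟨p, ?_, rfl⟩
        rcases hp with hpI | hpU
        · exact (hpI _ hmaxT).1.2
        · exact (hBA ⟨Set.mem_univ p, hpU.2⟩).2
    -- dropping the conservative part
    have hfresh : emb φ ∈ Cn (V ∪ cV (I ∪ (Set.univ \ A))) ↔
        emb φ ∈ Cn (V ∪ cV I) := by
      constructor
      · intro h
        by_contra hc
        simp only [Cn, Set.mem_setOf_eq, Entails] at hc
        push_neg at hc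
        obtain ⟨M, hM, hMφ⟩ := hc
        set Q : Set α := Set.univ \ A with hQ
        have hQA : ∀ q ∈ Q, q ∉ A := fun q hq => hq.2
        have hM' : ∀ ψ ∈ V ∪ cV (I ∪ Q), ψ.holds (fixSign Q M) := by
          rintro ψ (hψ | ⟨r, (hr | hr), rfl⟩)
          · rw [holds_fixSign_of_signedOver hVA hQA hψ]
            exact hM ψ (Set.mem_union_left _ hψ)
          · rw [fixSign_con'_iff (fun hcq => hcq.2 (hIsub hr))]
            exact hM _ (Set.mem_union_right _ ⟨r, hr, rfl⟩)
          · exact fixSign_con' hr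
        have hφ' : (emb φ).holds (fixSign Q M) := h _ hM'
        apply hMφ
        rw [← holds_fixSign (Q := Q) (M := M) ?_]
        · exact hφ'
        · intro q _
          constructor <;> intro hc <;>
            · rw [emb, atoms_map] at hc
              rcases hc with ⟨r, _, h'⟩
              injection h'
      · intro h
        exact Cn_mono
          (Set.union_subset_union_right _ (Set.image_mono Set.subset_union_left)) h
    have hPrud : PrudU W φ ↔ emb φ ∈ Cn (V ∪ cV I) := by
      show emb φ ∈ Cn (signedSet W ∪ ⋂ E ∈ Exts W, PiSet E) ↔ _
      rw [hInter]
      exact hfresh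
    constructor
    · intro hnp
      have himg : Dflt.con '' (deltap '' I) = cV I := by
        rw [← Set.image_comp]
        rfl
      refine ⟨deltap '' I, Set.image_mono hIsub, ?_, ?_⟩
      · rw [himg]
        exact fun hc => hnp (hPrud.2 hc)
      · rintro d ⟨⟨p, hpA, rfl⟩, hdC⟩
        have hpI : p ∉ I := fun hc => hdC ⟨p, hc, rfl⟩
        simp only [hI, Set.mem_setOf_eq] at hpI
        push_neg at hpI
        obtain ⟨T, hTmax, hpT⟩ := hpI
        obtain ⟨hcharT, hconsT, hextT⟩ := extension_of_max hVA (le_refl A) hTmax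
        have hTT : T ∪ (A \ A) = T := by simp
        rw [hTT] at hcharT hconsT hextT
        exact ⟨Cn (V ∪ cV T), hextT, con'_not_entailed hVA hconsT hpT⟩
    · rintro ⟨C, hCsub, hCnot, hCext⟩ hp
      apply hCnot
      have hPI : cV I ⊆ Dflt.con '' C := by
        rintro f ⟨p, hpI, rfl⟩
        have hpA : p ∈ A := hIsub hpI
        have hdC : deltap p ∈ C := by
          by_contra hdC
          obtain ⟨F, hFext, hFcon⟩ := hCext (deltap p) ⟨⟨p, hpA, rfl⟩, hdC⟩
          obtain ⟨hFEq, _, _, hFmax, _⟩ :=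
            max_of_extension hVA hVc (le_refl A) hFext
          have hpS := hpI _ hFmax
          apply hFcon
          rw [hFEq]
          exact subset_Cn (Set.mem_union_right _ ⟨p, hpS.1, rfl⟩)
        exact ⟨deltap p, hdC, rfl⟩
      exact Cn_mono (Set.union_subset_union_right _ hPI) (hPrud.1 hp)
  · -- inconsistent case: both sides are false
    have hall : ∀ X : Set (Fml (XAtom α)), emb φ ∈ Cn (V ∪ X) := by
      intro X M hM
      exact absurd
        (consistent_iff.2 ⟨M, fun ψ hψ => hM ψ (Set.mem_union_left _ hψ)⟩) hVc
    constructor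
    · intro h
      exact absurd (hall _) h
    · rintro ⟨C, _, hC, _⟩
      exact absurd (hall _) hC

end Para
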